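/- Let X₁, X₂, and Y be topological spaces and let φ be a homeomorphism of X₁ × X₂ onto a dense subset Z of Y. Suppose there is a continuous map ψ : Y → X₁ × X₂ such that ψ ∘ φ is the identity map of X₁ × X₂, and such that for each pair (M₁, M₂) of maximal limit sets of X₁ and X₂, ψ⁻¹(M₁ × M₂) equals the closure of φ(M₁ × M₂) in Y. Then the map Θ defined by Θ(M₁, M₂) := ψ⁻¹(M₁ × M₂) is a homeomorphism of ℳℒ(X₁) × ℳℒ(X₂) onto ℳℒ(Y). -/
import Mathlib


/-- `L` is a limit set if there is a net (equivalently, a proper filter) converging to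
every point of `L`. -/
def IsLimitSet {X : Type*} [TopologicalSpace X] (L : Set X) : Prop :=
  ∃ F : Filter X, F.NeBot ∧ ∀ x ∈ L, F ≤ nhds x

/-- A maximal limit set is a limit set not properly contained in any other limit set. -/
def IsMaxLimitSet {X : Type*} [TopologicalSpace X] (M : Set X) : Prop :=
  IsLimitSet M ∧ ∀ L : Set X, IsLimitSet L → M ⊆ L → L = M

/-- The lower Vietoris topology on `Set X`. -/
def lowerVietoris (X : Type*) [TopologicalSpace X] : TopologicalSpace (Set X) :=
  TopologicalSpace.generateFrom
    {V : Set (Set X) | ∃ U : Set X, IsOpen U ∧ V = {F : Set X | (F ∩ U).Nonempty}}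

/-- `ℳℒ(X)`: the space of maximal limit sets of `X`, with the subspace topology
inherited from the lower Vietoris topology. -/
def MLS (X : Type*) [TopologicalSpace X] : Type _ :=
  {M : Set X // IsMaxLimitSet M}

instance (X : Type*) [TopologicalSpace X] : TopologicalSpace (MLS X) :=
  TopologicalSpace.induced Subtype.val (lowerVietoris X)

open Set Filter Topology

section Aux

variable {X X₂ : Type*} [TopologicalSpace X] [TopologicalSpace X₂]

lemma isLimitSet_closure {L : Set X} (h : IsLimitSet L) : IsLimitSet (closure L) := by
  obtain ⟨F, hF, hle⟩ := h
  refine ⟨F, hF, fun x hx => ?_⟩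
  intro s hs
  obtain ⟨U, hUs, hUo, hxU⟩ := mem_nhds_iff.1 hs
  obtain ⟨y, hyU, hyL⟩ := mem_closure_iff.1 hx U hUo hxU
  exact Filter.mem_of_superset (hle y hyL (hUo.mem_nhds hyU)) hUs

lemma isLimitSet_image {f : X → X₂} (hf : Continuous f) {L : Set X}
    (h : IsLimitSet L) : IsLimitSet (f '' L) := by
  obtain ⟨F, hF, hle⟩ := h
  haveI := hF
  refine ⟨F.map f, Filter.map_neBot, ?_⟩
  rintro y ⟨x, hx, rfl⟩
  exact (Filter.map_mono (hle x hx)).trans hf.continuousAt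

lemma isLimitSet_prod {L₁ : Set X} {L₂ : Set X₂}
    (h1 : IsLimitSet L₁) (h2 : IsLimitSet L₂) : IsLimitSet (L₁ ×ˢ L₂) := by
  obtain ⟨F1, hF1, hle1⟩ := h1
  obtain ⟨F2, hF2, hle2⟩ := h2
  refine ⟨F1 ×ˢ F2, Filter.prod_neBot.2 ⟨hF1, hF2⟩, ?_⟩
  rintro ⟨x1, x2⟩ ⟨hx1, hx2⟩
  rw [nhds_prod_eq]
  exact Filter.prod_mono (hle1 x1 hx1) (hle2 x2 hx2)

lemma IsMaxLimitSet.nonempty {M : Set X} (h : IsMaxLimitSet M) : M.Nonempty := by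
  obtain ⟨⟨F, hF, _⟩, hmax⟩ := h
  haveI := hF
  obtain ⟨x⟩ : Nonempty X := Filter.nonempty_of_neBot F
  rcases M.eq_empty_or_nonempty with hM | hM
  · have hx : IsLimitSet ({x} : Set X) :=
      ⟨pure x, inferInstance, by rintro y rfl; exact pure_le_nhds y⟩
    have h2 : ({x} : Set X) = M := hmax {x} hx (hM ▸ Set.empty_subset _)
    rw [hM] at h2
    exact absurd h2 (Set.singleton_ne_empty x)
  · exact hM

lemma exists_maxLimitSet_superset {L : Set X} (hL : IsLimitSet L) :
    ∃ M, IsMaxLimitSet M ∧ L ⊆ M := by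
  have hchains : ∀ c ⊆ {S : Set X | IsLimitSet S}, IsChain (· ⊆ ·) c → c.Nonempty →
      ∃ ub ∈ {S : Set X | IsLimitSet S}, ∀ s ∈ c, s ⊆ ub := by
    intro c hcS hchain hcne
    refine ⟨⋃₀ c, ?_, fun s hs => subset_sUnion_of_mem hs⟩
    haveI : Nonempty c := hcne.to_subtype
    obtain ⟨S₀, hS₀⟩ := hcne
    obtain ⟨G₀, hG₀, _⟩ := hcS hS₀
    haveI := hG₀
    haveI : Nonempty X := Filter.nonempty_of_neBot G₀
    have hNe : ∀ S : c, (⨅ x ∈ (S : Set X), nhds x).NeBot := by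
      intro S
      obtain ⟨G, hG, hle⟩ := hcS S.2
      exact hG.mono (le_iInf₂ hle)
    have hdir : Directed (· ≥ ·) fun S : c => ⨅ x ∈ (S : Set X), nhds x := by
      intro S T
      rcases eq_or_ne (S : Set X) (T : Set X) with h | h
      · exact ⟨T, le_of_eq (by beta_reduce; rw [h]), le_rfl⟩
      rcases hchain S.2 T.2 (fun hST => h (by rw [hST])) with h' | h'
      · exact ⟨T, le_iInf₂ fun x hx => iInf₂_le x (h' hx), le_rfl⟩
      · exact ⟨S, le_rfl, le_iInf₂ fun x hx => iInf₂_le x (h' hx)⟩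
    haveI hFne : (⨅ S : c, ⨅ x ∈ (S : Set X), nhds x).NeBot :=
      Filter.iInf_neBot_of_directed hdir hNe
    refine ⟨_, hFne, ?_⟩
    rintro x ⟨S, hSc, hxS⟩
    exact le_trans (iInf_le _ (⟨S, hSc⟩ : c)) (iInf₂_le x hxS)
  obtain ⟨M, hLM, hM⟩ := zorn_subset_nonempty {S : Set X | IsLimitSet S} hchains L hL
  exact ⟨M, ⟨hM.prop, fun L' hL' hML' => subset_antisymm (hM.2 hL' hML') hML'⟩, hLM⟩

lemma isMaxLimitSet_prod {M₁ : Set X} {M₂ : Set X₂}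
    (h1 : IsMaxLimitSet M₁) (h2 : IsMaxLimitSet M₂) : IsMaxLimitSet (M₁ ×ˢ M₂) := by
  refine ⟨isLimitSet_prod h1.1 h2.1, fun L hL hsub => ?_⟩
  obtain ⟨y₂, hy₂⟩ := h2.nonempty
  obtain ⟨y₁, hy₁⟩ := h1.nonempty
  have hf : Prod.fst '' L = M₁ := h1.2 _ (isLimitSet_image continuous_fst hL)
    (fun x hx => ⟨(x, y₂), hsub ⟨hx, hy₂⟩, rfl⟩)
  have hs : Prod.snd '' L = M₂ := h2.2 _ (isLimitSet_image continuous_snd hL)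
    (fun x hx => ⟨(y₁, x), hsub ⟨hy₁, hx⟩, rfl⟩)
  refine subset_antisymm (fun p hp => ⟨?_, ?_⟩) hsub
  · exact hf ▸ ⟨p, hp, rfl⟩
  · exact hs ▸ ⟨p, hp, rfl⟩

lemma maxLimitSet_prod_structure {M : Set (X × X₂)} (hM : IsMaxLimitSet M) :
    ∃ M₁ M₂, IsMaxLimitSet M₁ ∧ IsMaxLimitSet M₂ ∧ M = M₁ ×ˢ M₂ := by
  have hMne := hM.nonempty
  have h1 : IsLimitSet (Prod.fst '' M) := isLimitSet_image continuous_fst hM.1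
  have h2 : IsLimitSet (Prod.snd '' M) := isLimitSet_image continuous_snd hM.1
  have hMeq : (Prod.fst '' M) ×ˢ (Prod.snd '' M) = M :=
    hM.2 _ (isLimitSet_prod h1 h2) (fun p hp => ⟨⟨p, hp, rfl⟩, ⟨p, hp, rfl⟩⟩)
  have hne1 : (Prod.fst '' M).Nonempty := hMne.image _
  have hne2 : (Prod.snd '' M).Nonempty := hMne.image _
  refine ⟨Prod.fst '' M, Prod.snd '' M, ⟨h1, ?_⟩, ⟨h2, ?_⟩, hMeq.symm⟩
  · intro L' hL' hsub
    have heq : L' ×ˢ (Prod.snd '' M) = M := hM.2 _ (isLimitSet_prod hL' h2)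
      (fun p hp => ⟨hsub ⟨p, hp, rfl⟩, ⟨p, hp, rfl⟩⟩)
    calc L' = Prod.fst '' (L' ×ˢ (Prod.snd '' M)) := (Set.fst_image_prod _ hne2).symm
      _ = Prod.fst '' M := by rw [heq]
  · intro L' hL' hsub
    have heq : (Prod.fst '' M) ×ˢ L' = M := hM.2 _ (isLimitSet_prod h1 hL')
      (fun p hp => ⟨⟨p, hp, rfl⟩, hsub ⟨p, hp, rfl⟩⟩)
    calc L' = Prod.snd '' ((Prod.fst '' M) ×ˢ L') := (Set.snd_image_prod hne1 _).symm
      _ = Prod.snd '' M := by rw [heq]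

lemma mls_basic_open {U : Set X} (hU : IsOpen U) :
    IsOpen {M : MLS X | (M.1 ∩ U).Nonempty} := by
  exact (@isOpen_induced_iff (MLS X) (Set X) (lowerVietoris X) _ Subtype.val).mpr
    ⟨{S : Set X | (S ∩ U).Nonempty},
      TopologicalSpace.isOpen_generateFrom_of_mem ⟨U, hU, rfl⟩, rfl⟩

lemma continuous_into_mls {A : Type*} [TopologicalSpace A] {f : A → MLS X}
    (h : ∀ U : Set X, IsOpen U → IsOpen {a | ((f a).1 ∩ U).Nonempty}) : Continuous f := by
  have key : @Continuous A (Set X) _ (lowerVietoris X) (fun a => (f a).1) := by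
    rw [lowerVietoris]
    refine continuous_generateFrom_iff.2 ?_
    rintro V ⟨U, hU, rfl⟩
    exact h U hU
  exact continuous_induced_rng.2 key

end Aux

/-- Lemma 3.1 (main retraction lemma): if `φ` is a homeomorphism of `X₁ × X₂` onto a
dense subset of `Y`, `ψ : Y → X₁ × X₂` is a continuous retraction (`ψ ∘ φ = id`), and
`ψ⁻¹(M₁ × M₂) = closure (φ(M₁ × M₂))` for all maximal limit sets `M₁`, `M₂`, then
`(M₁, M₂) ↦ ψ⁻¹(M₁ × M₂)` is a homeomorphism of `ℳℒ(X₁) × ℳℒ(X₂)` onto `ℳℒ(Y)`. -/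
theorem retraction_mls_homeomorph {X₁ X₂ Y : Type*} [TopologicalSpace X₁]
    [TopologicalSpace X₂] [TopologicalSpace Y] (φ : X₁ × X₂ → Y)
    (hφ : Topology.IsEmbedding φ) (hdense : DenseRange φ)
    (ψ : Y → X₁ × X₂) (hψ : Continuous ψ) (hretr : ψ ∘ φ = id)
    (hcl : ∀ (M₁ : Set X₁) (M₂ : Set X₂), IsMaxLimitSet M₁ → IsMaxLimitSet M₂ →
      ψ ⁻¹' (M₁ ×ˢ M₂) = closure (φ '' (M₁ ×ˢ M₂))) :
    ∃ Θ : MLS X₁ × MLS X₂ ≃ₜ MLS Y,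
      ∀ p : MLS X₁ × MLS X₂, (Θ p).1 = ψ ⁻¹' (p.1.1 ×ˢ p.2.1) := by
  classical
  have hψsurj : Function.Surjective ψ := fun p => ⟨φ p, congrFun hretr p⟩
  have hψφ : ∀ S : Set (X₁ × X₂), ψ '' (φ '' S) = S := by
    intro S
    rw [← Set.image_comp, hretr, Set.image_id]
  -- Θ is well-defined
  have key : ∀ (M₁ : Set X₁) (M₂ : Set X₂), IsMaxLimitSet M₁ → IsMaxLimitSet M₂ →
      IsMaxLimitSet (ψ ⁻¹' (M₁ ×ˢ M₂)) := by
    intro M₁ M₂ h1 h2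
    have hprod := isMaxLimitSet_prod h1 h2
    have hcl' := hcl M₁ M₂ h1 h2
    constructor
    · rw [hcl']
      exact isLimitSet_closure (isLimitSet_image hφ.continuous hprod.1)
    · intro L hL hsub
      have hφsub : φ '' (M₁ ×ˢ M₂) ⊆ L := subset_closure.trans (hcl' ▸ hsub)
      have hsub2 : M₁ ×ˢ M₂ ⊆ ψ '' L := by
        calc M₁ ×ˢ M₂ = ψ '' (φ '' (M₁ ×ˢ M₂)) := (hψφ _).symm
          _ ⊆ ψ '' L := Set.image_mono hφsub
      have him : ψ '' L = M₁ ×ˢ M₂ := hprod.2 _ (isLimitSet_image hψ hL) hsub2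
      refine subset_antisymm (fun y hy => ?_) hsub
      exact (him ▸ ⟨y, hy, rfl⟩ : ψ y ∈ M₁ ×ˢ M₂)
  -- Structure of maximal limit sets of Y
  have keyA : ∀ N : Set Y, IsMaxLimitSet N → ∃ M₁ M₂, IsMaxLimitSet M₁ ∧ IsMaxLimitSet M₂ ∧
      ψ '' N = M₁ ×ˢ M₂ ∧ N = ψ ⁻¹' (M₁ ×ˢ M₂) := by
    intro N hN
    obtain ⟨M, hMmax, hsub⟩ := exists_maxLimitSet_superset (isLimitSet_image hψ hN.1)
    obtain ⟨M₁, M₂, h1, h2, rfl⟩ := maxLimitSet_prod_structure hMmax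
    have hNsub : N ⊆ ψ ⁻¹' (M₁ ×ˢ M₂) := fun y hy => hsub ⟨y, hy, rfl⟩
    have hNeq : ψ ⁻¹' (M₁ ×ˢ M₂) = N := hN.2 _ (key M₁ M₂ h1 h2).1 hNsub
    exact ⟨M₁, M₂, h1, h2, by rw [← hNeq, Set.image_preimage_eq _ hψsurj], hNeq.symm⟩
  have invmax1 : ∀ N : MLS Y, IsMaxLimitSet (Prod.fst '' (ψ '' N.1)) := by
    intro N
    obtain ⟨M₁, M₂, h1, h2, heq, _⟩ := keyA N.1 N.2
    rw [heq, Set.fst_image_prod _ h2.nonempty]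
    exact h1
  have invmax2 : ∀ N : MLS Y, IsMaxLimitSet (Prod.snd '' (ψ '' N.1)) := by
    intro N
    obtain ⟨M₁, M₂, h1, h2, heq, _⟩ := keyA N.1 N.2
    rw [heq, Set.snd_image_prod h1.nonempty]
    exact h2
  refine ⟨{
    toFun := fun p => ⟨ψ ⁻¹' (p.1.1 ×ˢ p.2.1), key _ _ p.1.2 p.2.2⟩
    invFun := fun N => (⟨Prod.fst '' (ψ '' N.1), invmax1 N⟩, ⟨Prod.snd '' (ψ '' N.1), invmax2 N⟩)
    left_inv := ?_
    right_inv := ?_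
    continuous_toFun := ?_
    continuous_invFun := ?_ }, fun p => rfl⟩
  · rintro ⟨⟨M₁, h1⟩, ⟨M₂, h2⟩⟩
    have himg : ψ '' (ψ ⁻¹' (M₁ ×ˢ M₂)) = M₁ ×ˢ M₂ := Set.image_preimage_eq _ hψsurj
    refine Prod.ext (Subtype.ext ?_) (Subtype.ext ?_)
    · show Prod.fst '' (ψ '' (ψ ⁻¹' (M₁ ×ˢ M₂))) = M₁
      rw [himg, Set.fst_image_prod _ h2.nonempty]
    · show Prod.snd '' (ψ '' (ψ ⁻¹' (M₁ ×ˢ M₂))) = M₂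
      rw [himg, Set.snd_image_prod h1.nonempty]
  · rintro ⟨N, hN⟩
    obtain ⟨M₁, M₂, h1, h2, heq, hNeq⟩ := keyA N hN
    apply Subtype.ext
    show ψ ⁻¹' ((Prod.fst '' (ψ '' N)) ×ˢ (Prod.snd '' (ψ '' N))) = N
    rw [heq, Set.fst_image_prod _ h2.nonempty, Set.snd_image_prod h1.nonempty, ← hNeq]
  · -- continuity of Θ
    apply continuous_into_mls
    intro U hU
    have hrw : {p : MLS X₁ × MLS X₂ | ((ψ ⁻¹' (p.1.1 ×ˢ p.2.1)) ∩ U).Nonempty}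
        = {p : MLS X₁ × MLS X₂ | ((p.1.1 ×ˢ p.2.1) ∩ φ ⁻¹' U).Nonempty} := by
      ext p
      rw [Set.mem_setOf_eq, Set.mem_setOf_eq, hcl _ _ p.1.2 p.2.2]
      constructor
      · rintro ⟨y, hyc, hyU⟩
        obtain ⟨z, hzU, q, hq, rfl⟩ := mem_closure_iff.1 hyc U hU hyU
        exact ⟨q, hq, hzU⟩
      · rintro ⟨q, hq, hqU⟩
        exact ⟨φ q, subset_closure ⟨q, hq, rfl⟩, hqU⟩
    show IsOpen {p : MLS X₁ × MLS X₂ | ((ψ ⁻¹' (p.1.1 ×ˢ p.2.1)) ∩ U).Nonempty}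
    rw [hrw]
    apply isOpen_iff_forall_mem_open.2
    rintro ⟨⟨M₁, h1⟩, ⟨M₂, h2⟩⟩ ⟨⟨x₁, x₂⟩, ⟨hx1, hx2⟩, hxU⟩
    obtain ⟨U₁, U₂, hU₁, hU₂, hx₁U, hx₂U, hsubU⟩ :=
      isOpen_prod_iff.1 (hU.preimage hφ.continuous) x₁ x₂ hxU
    refine ⟨{p : MLS X₁ × MLS X₂ | (p.1.1 ∩ U₁).Nonempty} ∩
        {p : MLS X₁ × MLS X₂ | (p.2.1 ∩ U₂).Nonempty}, ?_, ?_, ?_⟩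
    · rintro ⟨⟨N₁, _⟩, ⟨N₂, _⟩⟩ ⟨⟨y₁, hy₁, hy₁U⟩, ⟨y₂, hy₂, hy₂U⟩⟩
      exact ⟨(y₁, y₂), ⟨hy₁, hy₂⟩, hsubU (Set.mk_mem_prod hy₁U hy₂U)⟩
    · exact IsOpen.inter ((mls_basic_open hU₁).preimage continuous_fst)
        ((mls_basic_open hU₂).preimage continuous_snd)
    · exact ⟨⟨x₁, hx1, hx₁U⟩, ⟨x₂, hx2, hx₂U⟩⟩
  · -- continuity of Θ⁻¹
    refine Continuous.prodMk ?_ ?_ <;> apply continuous_into_mls <;> intro U hU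
    · have hrw : {N : MLS Y | ((Prod.fst '' (ψ '' N.1)) ∩ U).Nonempty}
          = {N : MLS Y | (N.1 ∩ (fun y => (ψ y).1) ⁻¹' U).Nonempty} := by
        ext N
        simp only [Set.mem_setOf_eq]
        constructor
        · rintro ⟨x, ⟨z, ⟨y, hy, rfl⟩, rfl⟩, hxU⟩
          exact ⟨y, hy, hxU⟩
        · rintro ⟨y, hy, hyU⟩
          exact ⟨(ψ y).1, ⟨ψ y, ⟨y, hy, rfl⟩, rfl⟩, hyU⟩
      show IsOpen {N : MLS Y | ((Prod.fst '' (ψ '' N.1)) ∩ U).Nonempty}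
      rw [hrw]
      exact mls_basic_open (hU.preimage (continuous_fst.comp hψ))
    · have hrw : {N : MLS Y | ((Prod.snd '' (ψ '' N.1)) ∩ U).Nonempty}
          = {N : MLS Y | (N.1 ∩ (fun y => (ψ y).2) ⁻¹' U).Nonempty} := by
        ext N
        simp only [Set.mem_setOf_eq]
        constructor
        · rintro ⟨x, ⟨z, ⟨y, hy, rfl⟩, rfl⟩, hxU⟩
          exact ⟨y, hy, hxU⟩
        · rintro ⟨y, hy, hyU⟩
          exact ⟨(ψ y).2, ⟨ψ y, ⟨y, hy, rfl⟩, rfl⟩, hyU⟩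
      show IsOpen {N : MLS Y | ((Prod.snd '' (ψ '' N.1)) ∩ U).Nonempty}
      rw [hrw]
      exact mls_basic_open (hU.preimage (continuous_snd.comp hψ))
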